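/- arXiv:math/0301247 — 2 statements merged into one kernel-verified Lean document; each statement's English description precedes it below -/
import Mathlib

section
/- For every n ≥ 2, the automorphisms ε_{n,1}, ε_{n,2}, …, ε_{n,n-1} of the free group F_n are free generators of a free group of rank n−1; that is, the subgroup of Aut(F_n) they generate is free with these elements as a free basis. -/
/-- The basis-conjugating automorphism ε_{ij} of the free group:
`x_i ↦ x_j⁻¹ x_i x_j`, `x_l ↦ x_l` for `l ≠ i`. -/
def eps {n : ℕ} (i j : Fin n) : MulAut (FreeGroup (Fin n)) :=
  MonoidHom.toMulEquiv
    (FreeGroup.lift fun l =>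
      if l = i then (FreeGroup.of j)⁻¹ * FreeGroup.of i * FreeGroup.of j else FreeGroup.of l)
    (FreeGroup.lift fun l =>
      if l = i then FreeGroup.of j * FreeGroup.of i * (FreeGroup.of j)⁻¹ else FreeGroup.of l)
    (by ext l; by_cases h : l = i <;> by_cases h2 : j = i <;> simp [h, h2, mul_assoc])
    (by ext l; by_cases h : l = i <;> by_cases h2 : j = i <;> simp [h, h2, mul_assoc])

lemma eps_apply_of {n : ℕ} (i j l : Fin n) :
    eps i j (FreeGroup.of l) =
      if l = i then (FreeGroup.of j)⁻¹ * FreeGroup.of i * FreeGroup.of j else FreeGroup.of l := by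
  simp [eps, MonoidHom.toMulEquiv]

/-- The word map in the ε's. -/
noncomputable def Fmap (n : ℕ) : FreeGroup (Fin (n + 1)) →* MulAut (FreeGroup (Fin (n + 2))) :=
  FreeGroup.lift (fun k : Fin (n + 1) => eps (Fin.last (n + 1)) k.castSucc)

/-- The inclusion of free groups induced by `Fin.castSucc`. -/
noncomputable def phi (n : ℕ) : FreeGroup (Fin (n + 1)) →* FreeGroup (Fin (n + 2)) :=
  FreeGroup.lift (fun k : Fin (n + 1) => FreeGroup.of k.castSucc)

variable {n : ℕ}

lemma Fmap_fixes (w : FreeGroup (Fin (n + 1))) {l : Fin (n + 2)}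
    (hl : l ≠ Fin.last (n + 1)) : Fmap n w (FreeGroup.of l) = FreeGroup.of l := by
  induction w using FreeGroup.induction_on with
  | C1 => simp
  | of k =>
      rw [show Fmap n (FreeGroup.of k) = eps (Fin.last (n + 1)) k.castSucc from FreeGroup.lift_apply_of]
      simp [eps_apply_of, hl]
  | inv_of k ih =>
      rw [map_inv]
      exact (Fmap n (FreeGroup.of k)).injective (by simp [ih])
  | mul x y hx hy => simp [map_mul, MulAut.mul_apply, hy, hx]

lemma Fmap_fixes_phi (w v : FreeGroup (Fin (n + 1))) : Fmap n w (phi n v) = phi n v := by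
  induction v using FreeGroup.induction_on with
  | C1 => simp
  | of k =>
      rw [show phi n (FreeGroup.of k) = FreeGroup.of k.castSucc from FreeGroup.lift_apply_of]
      exact Fmap_fixes w (Fin.castSucc_lt_last k).ne
  | inv_of k ih => simp [map_inv, ih]
  | mul x y hx hy => simp [map_mul, hx, hy]

lemma Fmap_conj (w : FreeGroup (Fin (n + 1))) :
    Fmap n w (FreeGroup.of (Fin.last (n + 1))) =
      (phi n w)⁻¹ * FreeGroup.of (Fin.last (n + 1)) * phi n w := by
  induction w using FreeGroup.induction_on with
  | C1 => simp
  | of k =>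
      rw [show Fmap n (FreeGroup.of k) = eps (Fin.last (n + 1)) k.castSucc from FreeGroup.lift_apply_of,
        show phi n (FreeGroup.of k) = FreeGroup.of k.castSucc from FreeGroup.lift_apply_of]
      simp [eps_apply_of]
  | inv_of k ih =>
      rw [map_inv, map_inv]
      apply (Fmap n (FreeGroup.of k)).injective
      simp only [MulAut.apply_inv_self, map_mul, map_inv, ih, Fmap_fixes_phi]
      group
  | mul x y hx hy =>
      simp [map_mul, MulAut.mul_apply, hy, hx, Fmap_fixes_phi, mul_assoc]

lemma phi_letters (w : FreeGroup (Fin (n + 1))) :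
    ∀ p ∈ (phi n w).toWord, p.1 ≠ Fin.last (n + 1) := by
  induction w using FreeGroup.induction_on with
  | C1 => simp
  | of k =>
      rw [show phi n (FreeGroup.of k) = FreeGroup.of k.castSucc from FreeGroup.lift_apply_of,
        FreeGroup.toWord_of]
      rintro p hp
      simp only [List.mem_singleton] at hp
      subst hp
      exact (Fin.castSucc_lt_last k).ne
  | inv_of k ih =>
      rw [map_inv, FreeGroup.toWord_inv]
      rintro p hp
      simp only [FreeGroup.invRev, List.mem_reverse, List.mem_map] at hp
      obtain ⟨q, hq, rfl⟩ := hp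
      exact ih q hq
  | mul x y hx hy =>
      intro p hp
      have := (FreeGroup.toWord_mul_sublist (phi n x) (phi n y)).subset (by
        rw [← map_mul]; exact hp)
      rcases List.mem_append.1 this with h | h
      · exact hx p h
      · exact hy p h

lemma reduce_cons_of_ne {α : Type*} [DecidableEq α] {z : α} {b : Bool}
    {L : List (α × Bool)} (hL : FreeGroup.reduce L = L) (h : ∀ p ∈ L, p.1 ≠ z) :
    FreeGroup.reduce ((z, b) :: L) = (z, b) :: L := by
  rw [FreeGroup.reduce.cons, hL]
  cases L with
  | nil => rfl
  | cons hd tl =>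
      have : hd.1 ≠ z := h hd List.mem_cons_self
      simp [this.symm]

lemma reduce_append_of_ne {α : Type*} [DecidableEq α] {z : α} {b : Bool}
    {L : List (α × Bool)} (hL : FreeGroup.reduce L = L) (h : ∀ p ∈ L, p.1 ≠ z) :
    FreeGroup.reduce (L ++ [(z, b)]) = L ++ [(z, b)] := by
  have hM : FreeGroup.reduce (FreeGroup.invRev L) = FreeGroup.invRev L := by
    rw [FreeGroup.reduce_invRev, hL]
  have hM2 : ∀ p ∈ FreeGroup.invRev L, p.1 ≠ z := by
    rintro p hp
    simp only [FreeGroup.invRev, List.mem_reverse, List.mem_map] at hp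
    obtain ⟨q, hq, rfl⟩ := hp
    exact h q hq
  have key : FreeGroup.reduce ((z, !b) :: FreeGroup.invRev L) =
      (z, !b) :: FreeGroup.invRev L := reduce_cons_of_ne hM hM2
  have h2 : FreeGroup.invRev ((z, !b) :: FreeGroup.invRev L) = L ++ [(z, b)] := by
    simp [FreeGroup.invRev, List.map_reverse, Function.comp_def]
  calc FreeGroup.reduce (L ++ [(z, b)])
      = FreeGroup.reduce (FreeGroup.invRev ((z, !b) :: FreeGroup.invRev L)) := by rw [h2]
    _ = FreeGroup.invRev (FreeGroup.reduce ((z, !b) :: FreeGroup.invRev L)) :=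
        FreeGroup.reduce_invRev
    _ = L ++ [(z, b)] := by rw [key, h2]

lemma phi_eq_one {w : FreeGroup (Fin (n + 1))} (h : phi n w = 1) : w = 1 := by
  set ψ : FreeGroup (Fin (n + 2)) →* FreeGroup (Fin (n + 1)) :=
    FreeGroup.lift (fun l : Fin (n + 2) =>
      if hl : l = Fin.last (n + 1) then 1 else FreeGroup.of (l.castPred hl)) with hψ
  have key : ∀ v : FreeGroup (Fin (n + 1)), ψ (phi n v) = v := by
    intro v
    induction v using FreeGroup.induction_on with
    | C1 => simp
    | of k =>
        rw [show phi n (FreeGroup.of k) = FreeGroup.of k.castSucc from FreeGroup.lift_apply_of, hψ,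
          FreeGroup.lift_apply_of, dif_neg (Fin.castSucc_lt_last k).ne, Fin.castPred_castSucc]
    | inv_of k ih => simp [map_inv, ih]
    | mul x y hx hy => simp [map_mul, hx, hy]
  have := key w
  rw [h, map_one] at this
  exact this.symm

/-- For every `n ≥ 2` (here `n + 2`), the automorphisms
`ε_{n,1}, ε_{n,2}, …, ε_{n,n-1}` (0-based: `eps (Fin.last (n+1)) k` for `k ≠ Fin.last (n+1)`)
freely generate a free group of rank `n - 1`: the canonical homomorphism from the free
group of rank `n - 1` sending the free generators to these automorphisms is injective,
so they form a free basis of the subgroup they generate. -/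
theorem eps_last_free (n : ℕ) :
    Function.Injective
      (FreeGroup.lift (fun k : Fin (n + 1) => eps (Fin.last (n + 1)) k.castSucc) :
        FreeGroup (Fin (n + 1)) →* MulAut (FreeGroup (Fin (n + 2)))) := by
  show Function.Injective (Fmap n)
  rw [injective_iff_map_eq_one]
  intro w hw
  have hconj := Fmap_conj w
  rw [hw] at hconj
  have hcomm : FreeGroup.of (Fin.last (n + 1)) * phi n w =
      phi n w * FreeGroup.of (Fin.last (n + 1)) := by
    have : FreeGroup.of (Fin.last (n + 1)) =
        (phi n w)⁻¹ * FreeGroup.of (Fin.last (n + 1)) * phi n w := by simpa using hconj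
    calc FreeGroup.of (Fin.last (n + 1)) * phi n w
        = phi n w * ((phi n w)⁻¹ * FreeGroup.of (Fin.last (n + 1)) * phi n w) := by group
      _ = phi n w * FreeGroup.of (Fin.last (n + 1)) := by rw [← this]
  set a := phi n w with ha
  set L := a.toWord with hLdef
  have hared : FreeGroup.reduce L = L := a.reduce_toWord
  have hlet : ∀ p ∈ L, p.1 ≠ Fin.last (n + 1) := phi_letters w
  have hofa : FreeGroup.of (Fin.last (n + 1)) * a =
      FreeGroup.mk ((Fin.last (n + 1), true) :: L) := by
    rw [show FreeGroup.of (Fin.last (n + 1)) =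
        FreeGroup.mk [(Fin.last (n + 1), true)] from rfl,
      show a = FreeGroup.mk L from FreeGroup.mk_toWord.symm, FreeGroup.mul_mk]
    rfl
  have haof : a * FreeGroup.of (Fin.last (n + 1)) =
      FreeGroup.mk (L ++ [(Fin.last (n + 1), true)]) := by
    rw [show FreeGroup.of (Fin.last (n + 1)) =
        FreeGroup.mk [(Fin.last (n + 1), true)] from rfl,
      show a = FreeGroup.mk L from FreeGroup.mk_toWord.symm, FreeGroup.mul_mk]
  have hwords : (Fin.last (n + 1), true) :: L = L ++ [(Fin.last (n + 1), true)] := by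
    have := congrArg FreeGroup.toWord (hofa ▸ haof ▸ hcomm)
    rwa [FreeGroup.toWord_mk, FreeGroup.toWord_mk,
      reduce_cons_of_ne hared hlet, reduce_append_of_ne hared hlet] at this
  have hL0 : L = [] := by
    cases hL : L with
    | nil => rfl
    | cons hd tl =>
        exfalso
        rw [hL] at hwords hlet
        rw [List.cons_append] at hwords
        injection hwords with h1 h2
        exact hlet hd (by simp) (by rw [← h1])
  have ha1 : a = 1 := FreeGroup.toWord_eq_nil_iff.1 (by rw [← hLdef, hL0])
  exact phi_eq_one ha1
end

section
/- For n ≥ 2, the group of basis-conjugating automorphisms Cb_n is an iterated semidirect product Cb_n = D_{n-1} ⋉ (D_{n-2} ⋉ ( … ⋉ (D_2 ⋉ D_1)) … ): for each i, D_{n-1} ⋉ ( … ⋉ D_{i+1} … ) is normal in Cb_n, the product of the D_i equals Cb_n, and each D_i intersects the product of the lower-indexed factors trivially. In each D_i, the elements ε_{i+1,1},…,ε_{i+1,i} generate a free group of rank i and the elements ε_{1,i+1},…,ε_{i,i+1} generate a free abelian group of rank i. Moreover this decomposition is consistent with the decomposition of the pure braid group P_n: U_{i+1} ≤ D_i for i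 = 1,2,…,n−1, where U_{i+1} = ⟨a_{1,i+1}, a_{2,i+1}, …, a_{i,i+1}⟩. -/
/-- The group `Cb n` of basis-conjugating automorphisms. -/
def Cb (n : ℕ) : Subgroup (MulAut (FreeGroup (Fin n))) :=
  Subgroup.closure {e | ∃ i j : Fin n, i ≠ j ∧ e = eps i j}

/-- The subgroup `D_j` (0-based: the paper's `D_i` is `Dsub i`), generated by
`ε_{j,t}` and `ε_{t,j}` for all `t < j`. -/
def Dsub {n : ℕ} (j : Fin n) : Subgroup (MulAut (FreeGroup (Fin n))) :=
  Subgroup.closure {e | ∃ t : Fin n, t < j ∧ (e = eps j t ∨ e = eps t j)}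

/-- The braid automorphism: `x_i ↦ x_i x_j x_i⁻¹`, `x_j ↦ x_i`, `x_l ↦ x_l`. -/
def braidGen {n : ℕ} (i j : Fin n) : MulAut (FreeGroup (Fin n)) :=
  MonoidHom.toMulEquiv
    (FreeGroup.lift fun l =>
      if l = i then FreeGroup.of i * FreeGroup.of j * (FreeGroup.of i)⁻¹
      else if l = j then FreeGroup.of i else FreeGroup.of l)
    (FreeGroup.lift fun l =>
      if l = i then FreeGroup.of j
      else if l = j then (FreeGroup.of j)⁻¹ * FreeGroup.of i * FreeGroup.of j
      else FreeGroup.of l)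
    (by ext l; by_cases h : l = i <;> by_cases h2 : l = j <;> by_cases h3 : j = i <;>
      simp_all [mul_assoc])
    (by ext l; by_cases h : l = i <;> by_cases h2 : l = j <;> by_cases h3 : j = i <;>
      simp_all [mul_assoc])

/-- The braid generator σ_k (0-based) acting on the free group of rank `n`
(the identity if `k` is out of range). -/
def sigmaNat (n k : ℕ) : MulAut (FreeGroup (Fin n)) :=
  if h : k + 1 < n then braidGen ⟨k, by omega⟩ ⟨k + 1, h⟩ else 1

/- NOTE on conventions: the paper composes automorphisms left-to-right (right action),
while in Mathlib `(f * g) x = f (g x)`.  Hence a word `w₁ w₂ ⋯ w_k` of automorphisms in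
the paper corresponds to the Mathlib product `w_k * ⋯ * w₂ * w₁`; words below are
transcribed accordingly. -/

/-- The paper's conjugating word `σ_{j-1} σ_{j-2} ⋯ σ_{i+1}` (0-based indices),
transcribed into Mathlib composition order as `σ_{i+1} * ⋯ * σ_{j-1}`. -/
def aConj (n i j : ℕ) : MulAut (FreeGroup (Fin n)) :=
  (((List.range (j - 1 - i)).map fun t => sigmaNat n (j - 1 - t)).reverse).prod

/-- The pure braid generator `a_{ij} = σ_{j-1} ⋯ σ_{i+1} σ_i² σ_{i+1}⁻¹ ⋯ σ_{j-1}⁻¹`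
(0-based indices `i < j`; for `j = i+1` it is `σ_i²`), transcribed into Mathlib's
composition order. -/
def a0 (n i j : ℕ) : MulAut (FreeGroup (Fin n)) :=
  (aConj n i j)⁻¹ * (sigmaNat n i) ^ 2 * aConj n i j

/-! ### Auxiliary lemmas -/

section Aux

variable {n : ℕ}

@[simp] lemma eps_of (i j l : Fin n) :
    eps i j (FreeGroup.of l) =
      if l = i then (FreeGroup.of j)⁻¹ * FreeGroup.of i * FreeGroup.of j else FreeGroup.of l := by
  simp [eps]

@[simp] lemma eps_inv_of (i j l : Fin n) :
    (eps i j)⁻¹ (FreeGroup.of l) =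
      if l = i then FreeGroup.of j * FreeGroup.of i * (FreeGroup.of j)⁻¹ else FreeGroup.of l := by
  simp [eps, MulAut.inv_def]

@[simp] lemma braidGen_of (i j l : Fin n) :
    braidGen i j (FreeGroup.of l) =
      if l = i then FreeGroup.of i * FreeGroup.of j * (FreeGroup.of i)⁻¹
      else if l = j then FreeGroup.of i else FreeGroup.of l := by
  simp [braidGen]

@[simp] lemma braidGen_inv_of (i j l : Fin n) :
    (braidGen i j)⁻¹ (FreeGroup.of l) =
      if l = i then FreeGroup.of j
      else if l = j then (FreeGroup.of j)⁻¹ * FreeGroup.of i * FreeGroup.of j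
      else FreeGroup.of l := by
  simp [braidGen, MulAut.inv_def]

@[simp] lemma eps_symm_of (i j l : Fin n) :
    (eps i j).symm (FreeGroup.of l) =
      if l = i then FreeGroup.of j * FreeGroup.of i * (FreeGroup.of j)⁻¹ else FreeGroup.of l :=
  eps_inv_of i j l

@[simp] lemma braidGen_symm_of (i j l : Fin n) :
    (braidGen i j).symm (FreeGroup.of l) =
      if l = i then FreeGroup.of j
      else if l = j then (FreeGroup.of j)⁻¹ * FreeGroup.of i * FreeGroup.of j
      else FreeGroup.of l :=
  braidGen_inv_of i j l

lemma mulAut_ext (f g : MulAut (FreeGroup (Fin n)))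
    (h : ∀ l, f (FreeGroup.of l) = g (FreeGroup.of l)) : f = g := by
  apply MulEquiv.toMonoidHom_injective
  exact FreeGroup.ext_hom _ _ h

/-- Generic commutation: `ε_{ab}` and `ε_{pq}` commute as soon as `a ≠ p`, `a ≠ q`, `b ≠ p`. -/
lemma eps_commute (a b p q : Fin n) (h3 : a ≠ p) (h4 : a ≠ q) (h5 : b ≠ p) :
    Commute (eps a b) (eps p q) := by
  unfold Commute SemiconjBy
  apply mulAut_ext
  intro l
  by_cases hl1 : l = a <;> by_cases hl2 : l = p <;>
    simp_all [MulAut.mul_apply, _root_.map_mul, _root_.map_inv, eq_comm]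

lemma eps_rel3 (p q b : Fin n) (h1 : p ≠ q) (h2 : p ≠ b) (h3 : q ≠ b) :
    eps p b * eps p q * (eps p b)⁻¹ = (eps q b)⁻¹ * eps p q * eps q b := by
  apply mulAut_ext; intro l
  by_cases hl1 : l = p <;> by_cases hl2 : l = q <;>
    simp_all [MulAut.mul_apply, _root_.map_mul, _root_.map_inv, eq_comm, mul_assoc]

lemma eps_rel3' (p q b : Fin n) (h1 : p ≠ q) (h2 : p ≠ b) (h3 : q ≠ b) :
    (eps p b)⁻¹ * eps p q * eps p b = eps q b * eps p q * (eps q b)⁻¹ := by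
  apply mulAut_ext; intro l
  by_cases hl1 : l = p <;> by_cases hl2 : l = q <;>
    simp_all [MulAut.mul_apply, _root_.map_mul, _root_.map_inv, eq_comm, mul_assoc]

lemma eps_rel4 (p a b : Fin n) (h1 : p ≠ a) (h2 : p ≠ b) (h3 : a ≠ b) :
    eps a b * eps p a * (eps a b)⁻¹ = (eps p b)⁻¹ * eps p a * eps p b := by
  apply mulAut_ext; intro l
  by_cases hl1 : l = p <;> by_cases hl2 : l = a <;>
    simp_all [MulAut.mul_apply, _root_.map_mul, _root_.map_inv, eq_comm, mul_assoc]

lemma eps_rel4' (p a b : Fin n) (h1 : p ≠ a) (h2 : p ≠ b) (h3 : a ≠ b) :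
    (eps a b)⁻¹ * eps p a * eps a b = eps p b * eps p a * (eps p b)⁻¹ := by
  apply mulAut_ext; intro l
  by_cases hl1 : l = p <;> by_cases hl2 : l = a <;>
    simp_all [MulAut.mul_apply, _root_.map_mul, _root_.map_inv, eq_comm, mul_assoc]

lemma eps_rel5 (a b q : Fin n) (h1 : a ≠ b) (h2 : a ≠ q) (h3 : b ≠ q) :
    eps a b * eps b q * (eps a b)⁻¹ =
      (eps q b)⁻¹ * (eps a q)⁻¹ * eps q b * eps a q * eps b q := by
  apply mulAut_ext; intro l
  by_cases hl1 : l = a <;> by_cases hl2 : l = b <;> by_cases hl3 : l = q <;>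
    simp_all [MulAut.mul_apply, _root_.map_mul, _root_.map_inv, eq_comm, mul_assoc]

lemma eps_rel5' (a b q : Fin n) (h1 : a ≠ b) (h2 : a ≠ q) (h3 : b ≠ q) :
    (eps a b)⁻¹ * eps b q * eps a b =
      eps q b * (eps a q)⁻¹ * (eps q b)⁻¹ * eps a q * eps b q := by
  apply mulAut_ext; intro l
  by_cases hl1 : l = a <;> by_cases hl2 : l = b <;> by_cases hl3 : l = q <;>
    simp_all [MulAut.mul_apply, _root_.map_mul, _root_.map_inv, eq_comm, mul_assoc]

lemma braid_conj_eps_right (u v s : Fin n) (h1 : u ≠ v) (h2 : s ≠ u) (h3 : s ≠ v) :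
    (braidGen u v)⁻¹ * eps s u * braidGen u v = eps s v := by
  apply mulAut_ext; intro l
  by_cases hl1 : l = s <;> by_cases hl2 : l = u <;> by_cases hl3 : l = v <;>
    simp_all [MulAut.mul_apply, _root_.map_mul, _root_.map_inv, eq_comm, mul_assoc]

lemma braid_conj_eps_left (u v i : Fin n) (h1 : u ≠ v) (h2 : i ≠ u) (h3 : i ≠ v) :
    (braidGen u v)⁻¹ * eps u i * braidGen u v = eps u v * eps v i * (eps u v)⁻¹ := by
  apply mulAut_ext; intro l
  by_cases hl1 : l = i <;> by_cases hl2 : l = u <;> by_cases hl3 : l = v <;>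
    simp_all [MulAut.mul_apply, _root_.map_mul, _root_.map_inv, eq_comm, mul_assoc]

lemma braid_sq (u v : Fin n) (h1 : u ≠ v) :
    braidGen u v ^ 2 = (eps v u)⁻¹ * (eps u v)⁻¹ := by
  apply mulAut_ext; intro l
  by_cases hl2 : l = u <;> by_cases hl3 : l = v <;>
    simp_all [pow_two, MulAut.mul_apply, _root_.map_mul, _root_.map_inv, eq_comm, mul_assoc]

lemma kel_conj (m u v i : Fin n) (hmu : m ≠ u) (hmv : m ≠ v) (hmi : m ≠ i)
    (huv : u ≠ v) (hui : u ≠ i) (hvi : v ≠ i) :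
    eps m v * (eps u v * eps v i * (eps u v)⁻¹)⁻¹ * (eps m v)⁻¹ *
      (eps u v * eps v i * (eps u v)⁻¹) =
    eps m v * (eps v i)⁻¹ * (eps m v)⁻¹ * eps v i := by
  apply mulAut_ext; intro l
  by_cases hl1 : l = m <;> by_cases hl2 : l = u <;> by_cases hl3 : l = v <;>
    by_cases hl4 : l = i <;>
    simp_all [MulAut.mul_apply, _root_.map_mul, _root_.map_inv, eq_comm, mul_assoc]

end Aux

/-! ### Reduced words -/

section Words

open FreeGroup

variable {α : Type*} [DecidableEq α]

/-- A word with no adjacent cancelling pair. -/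
def NoCancel (L : List (α × Bool)) : Prop :=
  L.Chain' fun x y => ¬(x.1 = y.1 ∧ x.2 = !y.2)

lemma noCancel_reduce (L : List (α × Bool)) : NoCancel (reduce L) := by
  induction L with
  | nil => exact List.isChain_nil
  | cons x M ih =>
    rw [reduce.cons]
    rcases h : reduce M with _ | ⟨y, t⟩
    · exact List.isChain_singleton x
    · rw [h] at ih
      show NoCancel (if x.1 = y.1 ∧ x.2 = !y.2 then t else x :: y :: t)
      by_cases hc : x.1 = y.1 ∧ x.2 = !y.2
      · rw [if_pos hc]; exact ih.tail
      · rw [if_neg hc]; exact List.isChain_cons_cons.mpr ⟨hc, ih⟩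

lemma reduce_eq_self_of_noCancel : ∀ {L : List (α × Bool)}, NoCancel L → reduce L = L := by
  intro L
  induction L with
  | nil => intro; rfl
  | cons x M ih =>
    intro h
    have hM : reduce M = M := ih (List.IsChain.tail h)
    rw [reduce.cons, hM]
    cases M with
    | nil => rfl
    | cons y t =>
      have : ¬(x.1 = y.1 ∧ x.2 = !y.2) := List.isChain_cons_cons.mp h |>.1
      simp [this]

omit [DecidableEq α] in
lemma noCancel_invRev {L : List (α × Bool)} (h : NoCancel L) : NoCancel (invRev L) := by
  unfold NoCancel invRev List.Chain'
  rw [List.isChain_reverse, List.isChain_map]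
  apply h.imp
  intro x y hxy hc
  rcases hc with ⟨h1, h2⟩
  refine hxy ⟨h1.symm, ?_⟩
  simp at h2
  cases hx : x.2 <;> cases hy : y.2 <;> simp_all

omit [DecidableEq α] in
lemma mem_invRev {L : List (α × Bool)} {p : α × Bool} (h : p ∈ invRev L) :
    ∃ q ∈ L, p.1 = q.1 := by
  unfold invRev at h
  rw [List.mem_reverse, List.mem_map] at h
  rcases h with ⟨q, hq, rfl⟩
  exact ⟨q, hq, rfl⟩

lemma noCancel_toWord (u : FreeGroup α) : NoCancel u.toWord := by
  rw [← reduce_toWord]; exact noCancel_reduce _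

/-- In a free group, an element whose reduced word avoids the letter `s`
and which commutes with `of s` is trivial. -/
lemma eq_one_of_commute_of (s : α) (u : FreeGroup α)
    (hl : ∀ p ∈ u.toWord, p.1 ≠ s) (hc : u * FreeGroup.of s = FreeGroup.of s * u) : u = 1 := by
  have h1 : u⁻¹ * FreeGroup.of s * u = FreeGroup.of s := by
    rw [mul_assoc, ← hc, ← mul_assoc, inv_mul_cancel, one_mul]
  have hured : NoCancel u.toWord := noCancel_toWord u
  have hfull : NoCancel (invRev u.toWord ++ (s, true) :: u.toWord) := by
    rw [NoCancel, List.Chain', List.isChain_append]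
    refine ⟨noCancel_invRev hured, ?_, ?_⟩
    · rw [List.isChain_cons]
      refine ⟨?_, hured⟩
      intro y hy
      have hy' : y ∈ u.toWord := List.mem_of_mem_head? hy
      exact fun hcc => hl y hy' (hcc.1.symm ▸ rfl)
    · intro x hx y hy
      rcases List.mem_getLast?_eq_getLast hx with ⟨hne, rfl⟩
      have hmem : (invRev u.toWord).getLast hne ∈ invRev u.toWord := List.getLast_mem hne
      rcases mem_invRev hmem with ⟨q, hq, hfst⟩
      rw [List.head?_cons, Option.mem_some_iff] at hy
      subst hy
      exact fun hcc => hl q hq (by rw [← hfst]; exact hcc.1)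
  have hrepr : u⁻¹ * FreeGroup.of s * u = mk (invRev u.toWord ++ (s, true) :: u.toWord) := by
    conv_lhs => rw [← mk_toWord (x := u)]
    rw [inv_mk, show (FreeGroup.of s : FreeGroup α) = mk [(s, true)] from rfl, mul_mk, mul_mk]
    simp
  have hw : invRev u.toWord ++ (s, true) :: u.toWord = [(s, true)] := by
    have := congrArg toWord (hrepr ▸ h1)
    rwa [toWord_mk, reduce_eq_self_of_noCancel hfull, toWord_of] at this
  have hlen := congrArg List.length hw
  simp [invRev_length] at hlen
  have h0 : u.toWord = [] := List.length_eq_zero_iff.mp (by omega)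
  rw [← mk_toWord (x := u), h0, ← one_eq_mk]

/-- Letters of `of j ^ (k : ℤ)` all have first component `j`. -/
lemma zpow_of_letters (j : α) (k : ℤ) :
    ∀ p ∈ ((FreeGroup.of j : FreeGroup α) ^ k).toWord, p.1 = j := by
  intro p hp
  rcases k with k | k
  · rw [Int.ofNat_eq_coe, zpow_natCast, toWord_of_pow] at hp
    rw [List.eq_of_mem_replicate hp]
  · rw [Int.negSucc_eq, show (-((k:ℤ)+1)) = -((k+1 : ℕ) : ℤ) by push_cast; ring, zpow_neg, zpow_natCast, toWord_inv, toWord_of_pow] at hp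
    rcases mem_invRev hp with ⟨q, hq, hfst⟩
    rw [hfst, List.eq_of_mem_replicate hq]

lemma zpow_of_eq_one (j : α) (k : ℤ)
    (h : (FreeGroup.of j : FreeGroup α) ^ k = 1) : k = 0 := by
  rcases k with k | k
  · rw [Int.ofNat_eq_coe, zpow_natCast] at h
    have := congrArg toWord h
    rw [toWord_of_pow, toWord_one] at this
    simp only [List.replicate_eq_nil_iff] at this
    simp [this]
  · rw [Int.negSucc_eq, show (-((k:ℤ)+1)) = -((k+1 : ℕ) : ℤ) by push_cast; ring, zpow_neg, zpow_natCast, inv_eq_one] at h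
    have := congrArg toWord h
    rw [toWord_of_pow, toWord_one] at this
    simp at this

end Words

/-! ### The closed form of the pure-braid generators -/

def epsN (n i j : ℕ) : MulAut (FreeGroup (Fin n)) :=
  if h : i < n ∧ j < n then eps ⟨i, h.1⟩ ⟨j, h.2⟩ else 1

def KelN (n i m j : ℕ) : MulAut (FreeGroup (Fin n)) :=
  epsN n m j * (epsN n j i)⁻¹ * (epsN n m j)⁻¹ * epsN n j i

def Pform (n i j : ℕ) : MulAut (FreeGroup (Fin n)) :=
  (((List.range (j - 1 - i)).map fun r => KelN n i (i + 1 + r) j)).prod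

lemma epsN_eq {n i j : ℕ} (hi : i < n) (hj : j < n) : epsN n i j = eps ⟨i, hi⟩ ⟨j, hj⟩ := by
  rw [epsN, dif_pos ⟨hi, hj⟩]

lemma aConj_succ (n i j : ℕ) (hij : i < j) :
    aConj n i (j + 1) = aConj n i j * sigmaNat n j := by
  unfold aConj
  have h1 : j + 1 - 1 - i = (j - 1 - i) + 1 := by omega
  rw [h1, List.range_succ_eq_map]
  simp only [List.map_cons, List.map_map, List.reverse_cons, List.prod_append,
    List.prod_cons, List.prod_nil]
  have h2 : (fun t => sigmaNat n (j + 1 - 1 - t)) ∘ Nat.succ = fun t => sigmaNat n (j - 1 - t) := by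
    funext t
    have ht : j + 1 - 1 - Nat.succ t = j - 1 - t := by omega
    simp only [Function.comp_apply, ht]
  rw [h2]
  have h3 : j + 1 - 1 - 0 = j := by omega
  rw [h3, mul_one]

lemma a0_step (n i j : ℕ) (hij : i < j) :
    a0 n i (j + 1) = (sigmaNat n j)⁻¹ * a0 n i j * sigmaNat n j := by
  unfold a0
  rw [aConj_succ n i j hij, mul_inv_rev]
  group

lemma a0_base (n i : ℕ) : a0 n i (i + 1) = sigmaNat n i ^ 2 := by
  unfold a0 aConj
  simp

lemma a0_form (n : ℕ) : ∀ i j : ℕ, i < j → j < n →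
    a0 n i j = Pform n i j * (epsN n j i)⁻¹ * (epsN n i j)⁻¹ := by
  intro i j
  induction j with
  | zero => omega
  | succ j ih =>
    intro hij hjn
    rcases Nat.lt_or_ge i j with hij' | hj'
    · -- step case
      have hjn' : j < n := by omega
      have hin : i < n := by omega
      rw [a0_step n i j hij', ih hij' hjn']
      have hσ : sigmaNat n j = braidGen (⟨j, hjn'⟩ : Fin n) ⟨j + 1, hjn⟩ := by
        rw [sigmaNat, dif_pos hjn]
      set u : Fin n := ⟨j, hjn'⟩ with hu
      set v : Fin n := ⟨j + 1, hjn⟩ with hv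
      set fi : Fin n := ⟨i, hin⟩ with hfi
      set σ : MulAut (FreeGroup (Fin n)) := braidGen u v with hσ'
      rw [hσ]
      set φ : MulAut (FreeGroup (Fin n)) →* MulAut (FreeGroup (Fin n)) :=
        (MulAut.conj σ⁻¹).toMonoidHom with hφ
      have hφ_apply : ∀ x, φ x = σ⁻¹ * x * σ := by
        intro x; simp [hφ, MulAut.conj_apply]
      have huv : u ≠ v := by simp [hu, hv, Fin.ext_iff]
      have hui : u ≠ fi := by simp [hu, hfi, Fin.ext_iff]; omega
      have hvi : v ≠ fi := by simp [hv, hfi, Fin.ext_iff]; omega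
      have key_ij : φ (epsN n i j) = epsN n i (j + 1) := by
        rw [hφ_apply, epsN_eq hin hjn', epsN_eq hin hjn]
        exact braid_conj_eps_right u v fi huv (Ne.symm hui) (Ne.symm hvi)
      have key_ji : φ (epsN n j i) = eps u v * eps v fi * (eps u v)⁻¹ := by
        rw [hφ_apply, epsN_eq hjn' hin]
        exact braid_conj_eps_left u v fi huv (Ne.symm hui) (Ne.symm hvi)
      have key_m : ∀ m : ℕ, i < m → m < j → φ (KelN n i m j) = KelN n i m (j + 1) := by
        intro m him hmj
        have hmn : m < n := by omega
        set fm : Fin n := ⟨m, hmn⟩ with hfm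
        have hmu : fm ≠ u := by simp [hfm, hu, Fin.ext_iff]; omega
        have hmv : fm ≠ v := by simp [hfm, hv, Fin.ext_iff]; omega
        have hmi : fm ≠ fi := by simp [hfm, hfi, Fin.ext_iff]; omega
        have hmjconj : φ (epsN n m j) = epsN n m (j + 1) := by
          rw [hφ_apply, epsN_eq hmn hjn', epsN_eq hmn hjn]
          exact braid_conj_eps_right u v fm huv hmu hmv
        rw [KelN, _root_.map_mul, _root_.map_mul, _root_.map_mul, _root_.map_inv, _root_.map_inv, hmjconj, key_ji, KelN,
          epsN_eq hmn hjn, epsN_eq hjn hin]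
        exact kel_conj fm u v fi hmu hmv hmi huv hui hvi
      have hP : φ (Pform n i j) =
          ((List.range (j - 1 - i)).map fun r => KelN n i (i + 1 + r) (j + 1)).prod := by
        rw [Pform, map_list_prod, List.map_map]
        congr 1
        apply List.map_congr_left
        intro r hr
        have hr' : r < j - 1 - i := List.mem_range.mp hr
        exact key_m (i + 1 + r) (by omega) (by omega)
      have expand : ∀ x y z : MulAut (FreeGroup (Fin n)),
          σ⁻¹ * (x * y⁻¹ * z⁻¹) * σ = (φ x) * (φ y)⁻¹ * (φ z)⁻¹ := by
        intro x y z
        rw [hφ_apply, hφ_apply, hφ_apply]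
        group
      rw [expand, hP, key_ij, key_ji]
      have hPnew : Pform n i (j + 1) =
          (((List.range (j - 1 - i)).map fun r => KelN n i (i + 1 + r) (j + 1))).prod *
            KelN n i j (j + 1) := by
        rw [Pform, show j + 1 - 1 - i = (j - 1 - i) + 1 by omega, List.range_succ,
          List.map_append, List.prod_append]
        simp only [List.map_cons, List.map_nil, List.prod_cons, List.prod_nil, mul_one]
        congr 2
        omega
      rw [hPnew]
      rw [KelN, epsN_eq hjn hin, epsN_eq hjn' hjn, epsN_eq hin hjn]
      rw [← hu, ← hv, ← hfi]
      group
    · -- base case j = i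
      have : j = i := by omega
      subst this
      rw [a0_base, sigmaNat, dif_pos hjn,
        braid_sq ⟨j, by omega⟩ ⟨j+1, hjn⟩ (by simp [Fin.ext_iff])]
      rw [Pform]
      simp only [show j + 1 - 1 - j = 0 by omega, List.range_zero, List.map_nil,
        List.prod_nil, one_mul]
      rw [epsN_eq (show j + 1 < n by omega) (show j < n by omega),
        epsN_eq (show j < n by omega) (show j + 1 < n by omega)]

/-! ### Machinery for the free-abelian part (Part 6) -/

section PartSix

open FreeGroup

variable {n : ℕ}

lemma fix_of_pow (α : MulAut (FreeGroup (Fin n))) (x : FreeGroup (Fin n)) (h : α x = x) :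
    ∀ k : ℕ, (α ^ k) x = x := by
  intro k
  induction k with
  | zero => simp
  | succ k ih => rw [pow_succ, MulAut.mul_apply, h, ih]

lemma fix_of_zpow (α : MulAut (FreeGroup (Fin n))) (x : FreeGroup (Fin n)) (h : α x = x) :
    ∀ k : ℤ, (α ^ k) x = x := by
  intro k
  rcases k with k | k
  · simpa using fix_of_pow α x h k
  · rw [Int.negSucc_eq, show (-((k:ℤ)+1)) = -((k+1 : ℕ) : ℤ) by push_cast; ring, zpow_neg, zpow_natCast]
    have h2 := fix_of_pow α x h (k + 1)
    calc ((α ^ (k + 1))⁻¹) x = ((α ^ (k + 1))⁻¹) ((α ^ (k + 1)) x) := by rw [h2]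
    _ = x := by simp

lemma eps_pow_action (s j : Fin n) (hsj : s ≠ j) : ∀ (k : ℕ) (a b : ℤ),
    ((eps s j) ^ k) ((FreeGroup.of j) ^ a * FreeGroup.of s * (FreeGroup.of j) ^ b) =
      (FreeGroup.of j) ^ (a - k) * FreeGroup.of s * (FreeGroup.of j) ^ (b + k) := by
  intro k
  induction k with
  | zero => intro a b; simp
  | succ k ih =>
    intro a b
    have hα : (eps s j) ((FreeGroup.of j) ^ a * FreeGroup.of s * (FreeGroup.of j) ^ b) =
        (FreeGroup.of j) ^ (a - 1) * FreeGroup.of s * (FreeGroup.of j) ^ (b + 1) := by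
      simp only [_root_.map_mul, _root_.map_zpow, eps_of, eq_self_iff_true, if_true,
        if_neg (Ne.symm hsj)]
      group
    rw [pow_succ, MulAut.mul_apply, hα, ih]
    have e1 : a - 1 - (k : ℤ) = a - ((k : ℕ) + 1 : ℕ) := by push_cast; omega
    have e2 : b + 1 + (k : ℤ) = b + ((k : ℕ) + 1 : ℕ) := by push_cast; omega
    rw [e1, e2]

lemma eps_zpow_action (s j : Fin n) (hsj : s ≠ j) : ∀ (k : ℤ) (a b : ℤ),
    ((eps s j) ^ k) ((FreeGroup.of j) ^ a * FreeGroup.of s * (FreeGroup.of j) ^ b) =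
      (FreeGroup.of j) ^ (a - k) * FreeGroup.of s * (FreeGroup.of j) ^ (b + k) := by
  intro k a b
  rcases k with k | k
  · rw [Int.ofNat_eq_coe, zpow_natCast]
    exact eps_pow_action s j hsj k a b
  · have hk : (Int.negSucc k) = -((k + 1 : ℕ) : ℤ) := by rw [Int.negSucc_eq]; push_cast; ring
    rw [hk, zpow_neg, zpow_natCast]
    have h2 := eps_pow_action s j hsj (k + 1) (a + ((k + 1 : ℕ) : ℤ)) (b - ((k + 1 : ℕ) : ℤ))
    have e1 : a + ((k + 1 : ℕ) : ℤ) - ((k + 1 : ℕ) : ℤ) = a := by ring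
    have e2 : b - ((k + 1 : ℕ) : ℤ) + ((k + 1 : ℕ) : ℤ) = b := by ring
    rw [e1, e2] at h2
    have e3 : a - -((k + 1 : ℕ) : ℤ) = a + ((k + 1 : ℕ) : ℤ) := by ring
    have e4 : b + -((k + 1 : ℕ) : ℤ) = b - ((k + 1 : ℕ) : ℤ) := by ring
    rw [e3, e4, ← h2, MulAut.inv_def]
    exact MulEquiv.symm_apply_apply _ _

lemma factor_action (j s : Fin n) (hsj : s < j) (m : Fin n → ℤ) (t : Fin n) (a b : ℤ) :
    ((if t < j then (eps t j) ^ (m t) else 1 : MulAut (FreeGroup (Fin n))))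
        ((FreeGroup.of j) ^ a * FreeGroup.of s * (FreeGroup.of j) ^ b) =
      (FreeGroup.of j) ^ (a - (if t = s then m s else 0)) * FreeGroup.of s *
        (FreeGroup.of j) ^ (b + (if t = s then m s else 0)) := by
  by_cases hts : t = s
  · subst hts
    rw [if_pos hsj, if_pos rfl]
    exact eps_zpow_action t j (ne_of_lt hsj) (m t) a b
  · rw [if_neg hts]
    have hfix : (if t < j then (eps t j) ^ (m t) else 1 : MulAut (FreeGroup (Fin n)))
        ((FreeGroup.of j) ^ a * FreeGroup.of s * (FreeGroup.of j) ^ b) =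
        (FreeGroup.of j) ^ a * FreeGroup.of s * (FreeGroup.of j) ^ b := by
      by_cases htj : t < j
      · rw [if_pos htj]
        have f1 : (eps t j) (FreeGroup.of j) = FreeGroup.of j := by
          simp [(ne_of_lt htj).symm]
        have f2 : (eps t j) (FreeGroup.of s) = FreeGroup.of s := by
          rw [eps_of, if_neg (fun h => hts h.symm)]
        simp only [_root_.map_mul, _root_.map_zpow, fix_of_zpow _ _ f1, fix_of_zpow _ _ f2,
          fix_of_zpow _ _ f1 a, fix_of_zpow _ _ f1 b]
      · rw [if_neg htj]; rfl
    rw [hfix]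
    simp

lemma list_action (j s : Fin n) (hsj : s < j) (m : Fin n → ℤ) :
    ∀ (l : List (Fin n)) (a b : ℤ),
      ((l.map fun t => if t < j then (eps t j) ^ (m t) else 1).prod)
          ((FreeGroup.of j) ^ a * FreeGroup.of s * (FreeGroup.of j) ^ b) =
        (FreeGroup.of j) ^ (a - (l.map fun t => if t = s then m s else 0).sum) *
          FreeGroup.of s *
          (FreeGroup.of j) ^ (b + (l.map fun t => if t = s then m s else 0).sum) := by
  intro l
  induction l with
  | nil => intro a b; simp
  | cons hd tl ih =>
    intro a b
    rw [List.map_cons, List.prod_cons, MulAut.mul_apply, ih, factor_action j s hsj m hd]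
    rw [List.map_cons, List.sum_cons]
    have e1 : a - (tl.map fun t => if t = s then m s else 0).sum -
        (if hd = s then m s else 0) =
        a - ((if hd = s then m s else 0) + (tl.map fun t => if t = s then m s else 0).sum) := by
      omega
    have e2 : b + (tl.map fun t => if t = s then m s else 0).sum +
        (if hd = s then m s else 0) =
        b + ((if hd = s then m s else 0) + (tl.map fun t => if t = s then m s else 0).sum) := by
      omega
    rw [e1, e2]

lemma part6_lemma (j : Fin n) (m : Fin n → ℤ)
    (hprod : (List.ofFn fun t : Fin n => if t < j then (eps t j) ^ (m t) else 1).prod = 1) :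
    ∀ t : Fin n, t < j → m t = 0 := by
  intro s hsj
  have hsum : ((List.finRange n).map fun t => if t = s then m s else 0).sum = m s := by
    rw [← Fin.sum_univ_def]
    simp [Finset.sum_ite_eq']
  have h1 := list_action j s hsj m (List.finRange n) 0 0
  rw [← List.ofFn_eq_map, hprod, hsum] at h1
  simp only [zpow_zero, one_mul, mul_one, zero_sub, zero_add, MulAut.one_apply] at h1
  -- h1 : of s = of j ^ (-(m s)) * of s * of j ^ (m s)
  have hc : (FreeGroup.of j) ^ (m s) * FreeGroup.of s = FreeGroup.of s * (FreeGroup.of j) ^ (m s) := by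
    calc (FreeGroup.of j) ^ (m s) * FreeGroup.of s
        = (FreeGroup.of j) ^ (m s) *
          ((FreeGroup.of j) ^ (-(m s)) * FreeGroup.of s * (FreeGroup.of j) ^ (m s)) := by
          rw [← h1]
      _ = FreeGroup.of s * (FreeGroup.of j) ^ (m s) := by group
  have := eq_one_of_commute_of s ((FreeGroup.of j) ^ (m s))
    (fun p hp => by rw [zpow_of_letters j (m s) p hp]; exact (ne_of_lt hsj).symm) hc
  exact zpow_of_eq_one j (m s) this

end PartSix

/-! ### Part 4: the ε_{j,t} generate a free group -/

section PartFour

open FreeGroup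

variable {n : ℕ}

/-- The subgroup of elements of the free group whose reduced word avoids the letter `j`. -/
def avoidLetter (j : Fin n) : Subgroup (FreeGroup (Fin n)) where
  carrier := {u | ∀ p ∈ u.toWord, p.1 ≠ j}
  one_mem' := by simp [toWord_one]
  mul_mem' := by
    intro a b ha hb p hp
    have := (toWord_mul_sublist a b).subset hp
    rcases List.mem_append.mp this with h | h
    · exact ha p h
    · exact hb p h
  inv_mem' := by
    intro a ha p hp
    rw [toWord_inv] at hp
    rcases mem_invRev hp with ⟨q, hq, hfst⟩
    rw [hfst]
    exact ha q hq

lemma part4_lemma (j : Fin n) : Function.Injective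
    (FreeGroup.lift (fun t : {t : Fin n // t < j} => eps j t.val) :
      FreeGroup {t : Fin n // t < j} →* MulAut (FreeGroup (Fin n))) := by
  set φ : FreeGroup {t : Fin n // t < j} →* MulAut (FreeGroup (Fin n)) :=
    FreeGroup.lift (fun t : {t : Fin n // t < j} => eps j t.val) with hφ
  set ψ : FreeGroup {t : Fin n // t < j} →* FreeGroup (Fin n) :=
    FreeGroup.lift (fun t => FreeGroup.of t.val) with hψ
  have hψ_avoid : ∀ w, ψ w ∈ avoidLetter j := by
    intro w
    have : ψ.range ≤ avoidLetter j := by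
      rw [hψ, FreeGroup.range_lift_eq_closure]
      apply Subgroup.closure_le _ |>.mpr
      rintro x ⟨t, rfl⟩
      intro p hp
      rw [toWord_of] at hp
      rw [List.mem_singleton.mp hp]
      exact ne_of_lt t.prop
    exact this ⟨w, rfl⟩
  have hψinj : Function.Injective ψ := by
    set r : FreeGroup (Fin n) →* FreeGroup {t : Fin n // t < j} :=
      FreeGroup.lift (fun l : Fin n =>
        if h : l < j then FreeGroup.of (⟨l, h⟩ : {t : Fin n // t < j}) else 1) with hr
    have hcomp : ∀ w, r (ψ w) = w := by
      intro w
      have : r.comp ψ = MonoidHom.id _ := by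
        apply FreeGroup.ext_hom
        intro t
        simp [hr, hψ, t.prop]
      calc r (ψ w) = (r.comp ψ) w := rfl
      _ = w := by rw [this]; rfl
    intro a b h
    rw [← hcomp a, ← hcomp b, h]
  have key : ∀ w, (∀ l : Fin n, l ≠ j → φ w (FreeGroup.of l) = FreeGroup.of l) ∧
      φ w (FreeGroup.of j) = (ψ w)⁻¹ * FreeGroup.of j * ψ w := by
    intro w
    induction w using FreeGroup.induction_on with
    | C1 => simp
    | of t =>
      have hp : (pure t : FreeGroup {t : Fin n // t < j}) = FreeGroup.of t := rfl
      constructor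
      · intro l hl
        rw [hφ, FreeGroup.lift_apply_of, eps_of, if_neg hl]
      · rw [hφ, hψ, FreeGroup.lift_apply_of, FreeGroup.lift_apply_of, eps_of, if_pos rfl]
    | inv_of t ih =>
      have hp : (pure t : FreeGroup {t : Fin n // t < j}) = FreeGroup.of t := rfl
      constructor
      · intro l hl
        rw [_root_.map_inv, hφ, FreeGroup.lift_apply_of, eps_inv_of, if_neg hl]
      · rw [_root_.map_inv, _root_.map_inv, hφ, hψ, FreeGroup.lift_apply_of, FreeGroup.lift_apply_of,
          eps_inv_of, if_pos rfl]
        simp [mul_assoc]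
    | mul x y ihx ihy =>
      have hfix : ∀ v, φ x (ψ v) = ψ v := by
        intro v
        have : ((φ x).toMonoidHom.comp ψ) = ψ := by
          apply FreeGroup.ext_hom
          intro t
          simp only [MonoidHom.comp_apply, hψ, FreeGroup.lift_apply_of]
          exact ihx.1 t.val (ne_of_lt t.prop)
        calc φ x (ψ v) = ((φ x).toMonoidHom.comp ψ) v := rfl
        _ = ψ v := by rw [this]
      constructor
      · intro l hl
        rw [_root_.map_mul, MulAut.mul_apply, ihy.1 l hl, ihx.1 l hl]
      · rw [_root_.map_mul, MulAut.mul_apply, ihy.2, _root_.map_mul, _root_.map_mul, _root_.map_inv, hfix, ihx.2,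
          _root_.map_mul]
        simp [mul_assoc]
  intro w1 w2 h
  have h1 : φ (w1 * w2⁻¹) = 1 := by
    rw [_root_.map_mul, _root_.map_inv, h, mul_inv_cancel]
  have h2 := (key (w1 * w2⁻¹)).2
  rw [h1] at h2
  simp only [MulAut.one_apply] at h2
  have hc : ψ (w1 * w2⁻¹) * FreeGroup.of j = FreeGroup.of j * ψ (w1 * w2⁻¹) := by
    calc ψ (w1 * w2⁻¹) * FreeGroup.of j
        = ψ (w1 * w2⁻¹) * ((ψ (w1 * w2⁻¹))⁻¹ * FreeGroup.of j * ψ (w1 * w2⁻¹)) := by rw [← h2]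
      _ = FreeGroup.of j * ψ (w1 * w2⁻¹) := by group
  have hone : ψ (w1 * w2⁻¹) = 1 :=
    eq_one_of_commute_of j (ψ (w1 * w2⁻¹)) (hψ_avoid (w1 * w2⁻¹)) hc
  have : w1 * w2⁻¹ = 1 := hψinj (by rw [hone, _root_.map_one])
  exact mul_inv_eq_one.mp this

end PartFour

/-! ### Part 3: trivial intersections -/

section PartThree

open FreeGroup

variable {n : ℕ}

/-- Generators `x_t`, `t < j`. -/
def lowSet (j : Fin n) : Set (FreeGroup (Fin n)) :=
  {x | ∃ t : Fin n, t < j ∧ x = FreeGroup.of t}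

def lowGrp (j : Fin n) : Subgroup (FreeGroup (Fin n)) :=
  Subgroup.closure (lowSet j)

/-- Projection killing all letters `≥ j`. -/
def piHat (j : Fin n) : FreeGroup (Fin n) →* FreeGroup (Fin n) :=
  FreeGroup.lift fun l => if l < j then FreeGroup.of l else 1

lemma piHat_fix (j : Fin n) : ∀ x ∈ lowGrp j, piHat j x = x := by
  intro x hx
  induction hx using Subgroup.closure_induction with
  | mem x hx => rcases hx with ⟨t, ht, rfl⟩; simp [piHat, ht]
  | one => simp
  | mul x y _ _ hx hy => rw [_root_.map_mul, hx, hy]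
  | inv x _ hx => rw [_root_.map_inv, hx]

/-- Automorphisms fixing all `x_l`, `l ≥ j`. -/
def fixHigh (j : Fin n) : Subgroup (MulAut (FreeGroup (Fin n))) where
  carrier := {α | ∀ l : Fin n, ¬l < j → α (FreeGroup.of l) = FreeGroup.of l}
  one_mem' := by intro l _; rfl
  mul_mem' := by
    intro a b ha hb l hl
    rw [MulAut.mul_apply, hb l hl, ha l hl]
  inv_mem' := by
    intro a ha l hl
    rw [MulAut.inv_def, MulEquiv.symm_apply_eq]
    exact (ha l hl).symm

/-- Automorphisms commuting with the projection `piHat`. -/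
def stabPi (j : Fin n) : Subgroup (MulAut (FreeGroup (Fin n))) where
  carrier := {α | ∀ w, piHat j (α w) = piHat j w}
  one_mem' := by intro w; rfl
  mul_mem' := by
    intro a b ha hb w
    rw [MulAut.mul_apply, ha, hb]
  inv_mem' := by
    intro a ha w
    have h1 := ha (a⁻¹ w)
    rw [show a (a⁻¹ w) = w by simp] at h1
    exact h1.symm

/-- Automorphisms preserving the subgroup generated by low letters. -/
def presLow (j : Fin n) : Subgroup (MulAut (FreeGroup (Fin n))) where
  carrier := {α | (∀ x ∈ lowGrp j, α x ∈ lowGrp j) ∧ (∀ x ∈ lowGrp j, α⁻¹ x ∈ lowGrp j)}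
  one_mem' := ⟨fun x hx => hx, fun x hx => by simpa using hx⟩
  mul_mem' := by
    rintro a b ⟨ha1, ha2⟩ ⟨hb1, hb2⟩
    constructor
    · intro x hx
      rw [MulAut.mul_apply]
      exact ha1 _ (hb1 _ hx)
    · intro x hx
      rw [mul_inv_rev, MulAut.mul_apply]
      exact hb2 _ (ha2 _ hx)
  inv_mem' := by
    rintro a ⟨ha1, ha2⟩
    exact ⟨ha2, fun x hx => by simpa using ha1 x hx⟩

lemma eps_mem_stabPi (j i' j'' : Fin n) (h : ¬i' < j ∨ (i' < j ∧ ¬j'' < j)) :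
    eps i' j'' ∈ stabPi j := by
  intro w
  have hcomp : (piHat j).comp (eps i' j'').toMonoidHom = piHat j := by
    apply FreeGroup.ext_hom
    intro l
    simp only [MonoidHom.comp_apply, MulEquiv.coe_toMonoidHom, eps_of]
    by_cases hl : l = i'
    · subst hl
      rw [if_pos rfl, _root_.map_mul, _root_.map_mul, _root_.map_inv]
      rcases h with h | ⟨h1, h2⟩
      · rw [show piHat j (FreeGroup.of l) = 1 by rw [piHat, FreeGroup.lift_apply_of, if_neg h]]
        simp
      · rw [show piHat j (FreeGroup.of j'') = 1 by rw [piHat, FreeGroup.lift_apply_of, if_neg h2],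
          show piHat j (FreeGroup.of l) = FreeGroup.of l by
            rw [piHat, FreeGroup.lift_apply_of, if_pos h1]]
        simp
    · rw [if_neg hl]
  calc piHat j (eps i' j'' w) = ((piHat j).comp (eps i' j'').toMonoidHom) w := rfl
  _ = piHat j w := by rw [hcomp]

lemma Dsub_le_stabPi (j : Fin n) : Dsub j ≤ stabPi j := by
  rw [Dsub]
  apply (Subgroup.closure_le _).mpr
  rintro e ⟨t, htj, h | h⟩ <;> subst h
  · exact eps_mem_stabPi j j t (Or.inl (lt_irrefl j))
  · exact eps_mem_stabPi j t j (Or.inr ⟨htj, lt_irrefl j⟩)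

lemma eps_maps_low (j i' j'' : Fin n) (hi' : i' < j) (hj'' : j'' < j) :
    ∀ x ∈ lowGrp j, (eps i' j'') x ∈ lowGrp j := by
  intro x hx
  induction hx using Subgroup.closure_induction with
  | mem x hx =>
    rcases hx with ⟨s, hs, rfl⟩
    by_cases hsi : s = i'
    · subst hsi
      simp only [eps_of, if_pos rfl]
      exact mul_mem (mul_mem (inv_mem (Subgroup.subset_closure ⟨j'', hj'', rfl⟩))
        (Subgroup.subset_closure ⟨s, hs, rfl⟩)) (Subgroup.subset_closure ⟨j'', hj'', rfl⟩)
    · simp only [eps_of, if_neg hsi]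
      exact Subgroup.subset_closure ⟨s, hs, rfl⟩
  | one => simpa using one_mem _
  | mul x y _ _ hx hy => rw [_root_.map_mul]; exact mul_mem hx hy
  | inv x _ hx => rw [_root_.map_inv]; exact inv_mem hx

lemma eps_inv_maps_low (j i' j'' : Fin n) (hi' : i' < j) (hj'' : j'' < j) :
    ∀ x ∈ lowGrp j, (eps i' j'')⁻¹ x ∈ lowGrp j := by
  intro x hx
  induction hx using Subgroup.closure_induction with
  | mem x hx =>
    rcases hx with ⟨s, hs, rfl⟩
    by_cases hsi : s = i'
    · subst hsi
      simp only [eps_inv_of, if_pos rfl]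
      exact mul_mem (mul_mem (Subgroup.subset_closure ⟨j'', hj'', rfl⟩)
        (Subgroup.subset_closure ⟨s, hs, rfl⟩))
        (inv_mem (Subgroup.subset_closure ⟨j'', hj'', rfl⟩))
    · simp only [eps_inv_of, if_neg hsi]
      exact Subgroup.subset_closure ⟨s, hs, rfl⟩
  | one => simpa using one_mem _
  | mul x y _ _ hx hy => rw [_root_.map_mul]; exact mul_mem hx hy
  | inv x _ hx => rw [_root_.map_inv]; exact inv_mem hx

lemma eps_mem_low (j i' j'' : Fin n) (hi' : i' < j) (hj'' : j'' < j) :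
    eps i' j'' ∈ fixHigh j ⊓ presLow j := by
  constructor
  · intro l hl
    have h1 : l ≠ i' := fun h => hl (h ▸ hi')
    simp [eps_of, h1]
  · exact ⟨eps_maps_low j i' j'' hi' hj'', eps_inv_maps_low j i' j'' hi' hj''⟩

lemma low_iSup_le (j : Fin n) :
    (⨆ j' : Fin n, ⨆ _ : j' < j, Dsub j') ≤ fixHigh j ⊓ presLow j := by
  apply iSup_le; intro j'; apply iSup_le; intro hj'
  rw [Dsub]
  apply (Subgroup.closure_le _).mpr
  rintro e ⟨t, htj', h | h⟩ <;> subst h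
  · exact eps_mem_low j j' t hj' (htj'.trans hj')
  · exact eps_mem_low j t j' (htj'.trans hj') hj'

lemma part3_lemma (j : Fin n) :
    Dsub j ⊓ (⨆ j' : Fin n, ⨆ _ : j' < j, Dsub j') = ⊥ := by
  rw [eq_bot_iff]
  intro α hα
  rcases hα with ⟨hα1, hα2⟩
  have hstab : α ∈ stabPi j := Dsub_le_stabPi j hα1
  have hlow : α ∈ fixHigh j ⊓ presLow j := low_iSup_le j hα2
  rw [Subgroup.mem_bot]
  apply mulAut_ext
  intro l
  rw [MulAut.one_apply]
  by_cases hl : l < j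
  · have hmem : α (FreeGroup.of l) ∈ lowGrp j :=
      hlow.2.1 (FreeGroup.of l) (Subgroup.subset_closure ⟨l, hl, rfl⟩)
    have h1 : piHat j (α (FreeGroup.of l)) = piHat j (FreeGroup.of l) := hstab _
    rw [piHat_fix j _ hmem] at h1
    rw [h1]
    simp [piHat, hl]
  · exact hlow.1 l hl

end PartThree

/-! ### Part 1: tails are normal; Part 2: the D_j generate Cb -/

section PartOne

variable {n : ℕ}

def highSet (t : Fin n) : Set (MulAut (FreeGroup (Fin n))) :=
  {e | ∃ p q : Fin n, p ≠ q ∧ (t ≤ p ∨ t ≤ q) ∧ e = eps p q}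

lemma Dsub_le_Cb (j : Fin n) : Dsub j ≤ Cb n := by
  rw [Dsub, Cb]
  apply (Subgroup.closure_le _).mpr
  rintro e ⟨s, hsj, h | h⟩ <;> subst h
  · exact Subgroup.subset_closure ⟨j, s, hsj.ne', rfl⟩
  · exact Subgroup.subset_closure ⟨s, j, hsj.ne, rfl⟩

lemma tail_eq_closure (t : Fin n) :
    (⨆ j : Fin n, ⨆ _ : t ≤ j, Dsub j) = Subgroup.closure (highSet t) := by
  apply le_antisymm
  · apply iSup_le; intro j; apply iSup_le; intro htj
    rw [Dsub]
    apply (Subgroup.closure_le _).mpr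
    rintro e ⟨s, hsj, h | h⟩ <;> subst h
    · exact Subgroup.subset_closure ⟨j, s, hsj.ne', Or.inl htj, rfl⟩
    · exact Subgroup.subset_closure ⟨s, j, hsj.ne, Or.inr htj, rfl⟩
  · apply (Subgroup.closure_le _).mpr
    rintro e ⟨p, q, hpq, hor, rfl⟩
    rcases lt_or_gt_of_ne hpq with h | h
    · have htq : t ≤ q := by
        rcases hor with h1 | h1
        · exact le_of_lt (lt_of_le_of_lt h1 h)
        · exact h1
      have hmem : eps p q ∈ Dsub q := Subgroup.subset_closure ⟨p, h, Or.inr rfl⟩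
      exact SetLike.mem_coe.mpr
        (Subgroup.mem_iSup_of_mem q (Subgroup.mem_iSup_of_mem htq hmem))
    · have htp : t ≤ p := by
        rcases hor with h1 | h1
        · exact h1
        · exact le_of_lt (lt_of_le_of_lt h1 h)
      have hmem : eps p q ∈ Dsub p := Subgroup.subset_closure ⟨q, h, Or.inl rfl⟩
      exact SetLike.mem_coe.mpr
        (Subgroup.mem_iSup_of_mem p (Subgroup.mem_iSup_of_mem htp hmem))

lemma tail_normal_aux (t : Fin n) :
    ∀ g ∈ Cb n, ∀ h ∈ Subgroup.closure (highSet t),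
      g * h * g⁻¹ ∈ Subgroup.closure (highSet t) ∧
      g⁻¹ * h * g ∈ Subgroup.closure (highSet t) := by
  intro g hg
  induction hg using Subgroup.closure_induction with
  | mem e he =>
    rcases he with ⟨a, b, hab, rfl⟩
    intro h hh
    induction hh using Subgroup.closure_induction with
    | mem s hs =>
      rcases hs with ⟨p, q, hpq, hor, rfl⟩
      by_cases htab : t ≤ a ∨ t ≤ b
      · have he : eps a b ∈ Subgroup.closure (highSet t) :=
          Subgroup.subset_closure ⟨a, b, hab, htab, rfl⟩
        have hs : eps p q ∈ Subgroup.closure (highSet t) :=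
          Subgroup.subset_closure ⟨p, q, hpq, hor, rfl⟩
        exact ⟨mul_mem (mul_mem he hs) (inv_mem he),
          mul_mem (mul_mem (inv_mem he) hs) he⟩
      · push_neg at htab
        obtain ⟨hta, htb⟩ := htab
        have ha : a < t := hta
        have hb : b < t := htb
        by_cases htq : t ≤ q
        · have hqa : a ≠ q := (lt_of_lt_of_le ha htq).ne
          have hqb : b ≠ q := (lt_of_lt_of_le hb htq).ne
          have m1 : eps q b ∈ Subgroup.closure (highSet t) :=
            Subgroup.subset_closure ⟨q, b, Ne.symm hqb, Or.inl htq, rfl⟩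
          have m2 : eps a q ∈ Subgroup.closure (highSet t) :=
            Subgroup.subset_closure ⟨a, q, hqa, Or.inr htq, rfl⟩
          have m3 : eps b q ∈ Subgroup.closure (highSet t) :=
            Subgroup.subset_closure ⟨b, q, hqb, Or.inr htq, rfl⟩
          have m4 : eps p q ∈ Subgroup.closure (highSet t) :=
            Subgroup.subset_closure ⟨p, q, hpq, Or.inr htq, rfl⟩
          by_cases hpa : p = a
          · subst hpa
            constructor
            · rw [eps_rel3 p q b hpq hab (Ne.symm hqb)]
              exact mul_mem (mul_mem (inv_mem m1) m4) m1
            · rw [eps_rel3' p q b hpq hab (Ne.symm hqb)]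
              exact mul_mem (mul_mem m1 m4) (inv_mem m1)
          · by_cases hpb : p = b
            · subst hpb
              constructor
              · rw [eps_rel5 a p q hab hqa hpq]
                exact mul_mem (mul_mem (mul_mem (mul_mem (inv_mem m1) (inv_mem m2)) m1) m2) m3
              · rw [eps_rel5' a p q hab hqa hpq]
                exact mul_mem (mul_mem (mul_mem (mul_mem m1 (inv_mem m2)) (inv_mem m1)) m2) m3
            · have hcomm : Commute (eps a b) (eps p q) :=
                eps_commute a b p q (fun hh => hpa hh.symm) hqa (fun hh => hpb hh.symm)
              constructor
              · rw [show eps a b * eps p q * (eps a b)⁻¹ = eps p q by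
                  rw [hcomm.eq, mul_inv_cancel_right]]
                exact m4
              · rw [show (eps a b)⁻¹ * eps p q * eps a b = eps p q by
                  rw [hcomm.inv_left.eq, inv_mul_cancel_right]]
                exact m4
        · have htp : t ≤ p := hor.resolve_right htq
          have hpa : p ≠ a := (lt_of_lt_of_le ha htp).ne'
          have hpb : p ≠ b := (lt_of_lt_of_le hb htp).ne'
          have m4 : eps p q ∈ Subgroup.closure (highSet t) :=
            Subgroup.subset_closure ⟨p, q, hpq, Or.inl htp, rfl⟩
          by_cases hqa : q = a
          · subst hqa
            have m5 : eps p b ∈ Subgroup.closure (highSet t) :=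
              Subgroup.subset_closure ⟨p, b, hpb, Or.inl htp, rfl⟩
            constructor
            · rw [eps_rel4 p q b hpq hpb hab]
              exact mul_mem (mul_mem (inv_mem m5) m4) m5
            · rw [eps_rel4' p q b hpq hpb hab]
              exact mul_mem (mul_mem m5 m4) (inv_mem m5)
          · have hcomm : Commute (eps a b) (eps p q) :=
              eps_commute a b p q (Ne.symm hpa) (fun hh => hqa hh.symm) (Ne.symm hpb)
            constructor
            · rw [show eps a b * eps p q * (eps a b)⁻¹ = eps p q by
                rw [hcomm.eq, mul_inv_cancel_right]]
              exact m4
            · rw [show (eps a b)⁻¹ * eps p q * eps a b = eps p q by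
                rw [hcomm.inv_left.eq, inv_mul_cancel_right]]
              exact m4
    | one =>
      constructor <;> · simpa using one_mem _
    | mul x y hx hy ihx ihy =>
      obtain ⟨hx1, hx2⟩ := ihx
      obtain ⟨hy1, hy2⟩ := ihy
      constructor
      · rw [show eps a b * (x * y) * (eps a b)⁻¹ =
          (eps a b * x * (eps a b)⁻¹) * (eps a b * y * (eps a b)⁻¹) by group]
        exact mul_mem hx1 hy1
      · rw [show (eps a b)⁻¹ * (x * y) * eps a b =
          ((eps a b)⁻¹ * x * eps a b) * ((eps a b)⁻¹ * y * eps a b) by group]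
        exact mul_mem hx2 hy2
    | inv x hx ihx =>
      obtain ⟨h1, h2⟩ := ihx
      constructor
      · rw [show eps a b * x⁻¹ * (eps a b)⁻¹ = (eps a b * x * (eps a b)⁻¹)⁻¹ by group]
        exact inv_mem h1
      · rw [show (eps a b)⁻¹ * x⁻¹ * eps a b = ((eps a b)⁻¹ * x * eps a b)⁻¹ by group]
        exact inv_mem h2
  | one =>
    intro h hh
    constructor <;> · simpa using hh
  | mul x y hx hy ihx ihy =>
    intro h hh
    constructor
    · rw [show (x * y) * h * (x * y)⁻¹ = x * (y * h * y⁻¹) * x⁻¹ by group]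
      exact (ihx _ ((ihy h hh).1)).1
    · rw [show (x * y)⁻¹ * h * (x * y) = y⁻¹ * (x⁻¹ * h * x) * y by group]
      exact (ihy _ ((ihx h hh).2)).2
  | inv x hx ihx =>
    intro h hh
    constructor
    · rw [show x⁻¹ * h * (x⁻¹)⁻¹ = x⁻¹ * h * x by rw [inv_inv]]
      exact (ihx h hh).2
    · rw [show (x⁻¹)⁻¹ * h * x⁻¹ = x * h * x⁻¹ by rw [inv_inv]]
      exact (ihx h hh).1

end PartOne

/-- Theorem 3.1: for `n ≥ 2`, the group of basis-conjugating automorphisms `Cb_n`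
is the iterated semidirect product `D_{n-1} ⋉ (D_{n-2} ⋉ (⋯ ⋉ (D_2 ⋉ D_1))⋯)`:
every "upper tail" `⟨D_j : j ≥ t⟩` is normal in `Cb_n`, the `D_j` together generate
`Cb_n`, and each `D_j` meets the subgroup generated by the lower-indexed factors
trivially.  Moreover in each `D_j` the elements `ε_{j,t}` (`t < j`) freely generate
a free group of rank `j` and the elements `ε_{t,j}` (`t < j`) generate a free abelian
group of rank `j`; and the decomposition is consistent with that of the pure braid
group: `U_{j} = ⟨a_{t,j} : t < j⟩ ≤ D_j`. -/
theorem Cb_iterated_semidirect (n : ℕ) (hn : 2 ≤ n) :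
    -- each tail ⟨D_j : j ≥ t⟩ is a normal subgroup of Cb_n
    (∀ t : Fin n, (⨆ j : Fin n, ⨆ _ : t ≤ j, Dsub j) ≤ Cb n ∧
      ((⨆ j : Fin n, ⨆ _ : t ≤ j, Dsub j).subgroupOf (Cb n)).Normal) ∧
    -- the D_j generate Cb_n
    (⨆ j : Fin n, Dsub j) = Cb n ∧
    -- each D_j meets the product of the lower-indexed factors trivially
    (∀ j : Fin n, Dsub j ⊓ (⨆ j' : Fin n, ⨆ _ : j' < j, Dsub j') = ⊥) ∧
    -- ε_{j,t}, t < j, freely generate a free subgroup of rank j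
    (∀ j : Fin n, Function.Injective
      (FreeGroup.lift (fun t : {t : Fin n // t < j} => eps j t.val) :
        FreeGroup {t : Fin n // t < j} →* MulAut (FreeGroup (Fin n)))) ∧
    -- ε_{t,j}, t < j, generate a free abelian subgroup of rank j
    (∀ j : Fin n, ∀ t t' : Fin n, t < j → t' < j → Commute (eps t j) (eps t' j)) ∧
    (∀ j : Fin n, ∀ m : Fin n → ℤ,
      (List.ofFn fun t : Fin n => if t < j then (eps t j) ^ (m t) else 1).prod = 1 →
        ∀ t : Fin n, t < j → m t = 0) ∧
    -- U_{j+1} ≤ D_j (0-based: ⟨a_{t,j} : t < j⟩ ≤ Dsub j)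
    (∀ j : Fin n,
      Subgroup.closure {e | ∃ t : ℕ, t < (j : ℕ) ∧ e = a0 n t (j : ℕ)} ≤ Dsub j) := by
  refine ⟨?part1, ?part2, fun j => part3_lemma j, fun j => part4_lemma j, ?part5,
    fun j => part6_lemma j, ?part7⟩
  case part1 =>
    intro t
    refine ⟨?_, ?_⟩
    · apply iSup_le; intro j; apply iSup_le; intro _; exact Dsub_le_Cb j
    · constructor
      intro x hx g
      rw [Subgroup.mem_subgroupOf] at hx ⊢
      rw [tail_eq_closure] at hx ⊢
      have := (tail_normal_aux t (g : MulAut (FreeGroup (Fin n))) g.2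
        (x : MulAut (FreeGroup (Fin n))) hx).1
      simpa using this
  case part2 =>
    apply le_antisymm
    · exact iSup_le fun j => Dsub_le_Cb j
    · rw [Cb]
      apply (Subgroup.closure_le _).mpr
      rintro e ⟨i, j, hij, rfl⟩
      rcases lt_or_gt_of_ne hij with h | h
      · exact SetLike.mem_coe.mpr
          (Subgroup.mem_iSup_of_mem j (Subgroup.subset_closure ⟨i, h, Or.inr rfl⟩))
      · exact SetLike.mem_coe.mpr
          (Subgroup.mem_iSup_of_mem i (Subgroup.subset_closure ⟨j, h, Or.inl rfl⟩))
  case part5 =>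
    intro j t t' ht ht'
    by_cases htt : t = t'
    · subst htt; exact Commute.refl _
    · exact eps_commute t j t' j htt ht.ne ht'.ne'
  case part7 =>
    intro j
    apply (Subgroup.closure_le _).mpr
    rintro e ⟨t, htj, rfl⟩
    have hjn : (j : ℕ) < n := j.isLt
    have htn : t < n := lt_trans htj hjn
    rw [a0_form n t (j : ℕ) htj hjn]
    have hfin : (⟨(j : ℕ), hjn⟩ : Fin n) = j := by simp [Fin.ext_iff]
    have hm1 : epsN n (j : ℕ) t ∈ Dsub j := by
      rw [epsN_eq hjn htn, hfin]
      exact Subgroup.subset_closure ⟨⟨t, htn⟩, by simpa [Fin.lt_def] using htj, Or.inl rfl⟩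
    have hm2 : epsN n t (j : ℕ) ∈ Dsub j := by
      rw [epsN_eq htn hjn, hfin]
      exact Subgroup.subset_closure ⟨⟨t, htn⟩, by simpa [Fin.lt_def] using htj, Or.inr rfl⟩
    have hP : Pform n t (j : ℕ) ∈ Dsub j := by
      apply Subgroup.list_prod_mem
      intro x hx
      rw [List.mem_map] at hx
      obtain ⟨r, hr, rfl⟩ := hx
      have hr' : r < (j : ℕ) - 1 - t := List.mem_range.mp hr
      have hmn : t + 1 + r < n := by omega
      have hmj : t + 1 + r < (j : ℕ) := by omega
      have hmm : epsN n (t + 1 + r) (j : ℕ) ∈ Dsub j := by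
        rw [epsN_eq hmn hjn, hfin]
        exact Subgroup.subset_closure ⟨⟨t + 1 + r, hmn⟩, by simpa [Fin.lt_def] using hmj,
          Or.inr rfl⟩
      have hmj2 : epsN n (j : ℕ) t ∈ Dsub j := hm1
      rw [KelN]
      exact mul_mem (mul_mem (mul_mem hmm (inv_mem hmj2)) (inv_mem hmm)) hmj2
    exact SetLike.mem_coe.mpr (mul_mem (mul_mem hP (inv_mem hm1)) (inv_mem hm2))
end
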